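/- Let q be a prime power and let integers satisfy 1 = u_1 < u_2 < u_3 < k and u_2 + u_3 ≤ k + 1. Set n = (q^k - 1)/(q - 1) - (q^{u_2} - 1)/(q - 1) - (q^{u_3} - 1)/(q - 1) + 1 and d = q^{k-1} - q^{u_2-1} - q^{u_3-1}. Then there exists an [n,k]_q linear code C with minimum Hamming distance d such that for every 1 ≤ r ≤ k, the number of integers j with A_j^r(C) ≠ 0 is at most 2·min{u_2·u_3, (r + 1)^2, (k - r + 1)^2}. -/
import Mathlib

open Finset Module Projectivization
open scoped LinearAlgebra.Projectivization
set_option linter.unusedSectionVars false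
set_option linter.unusedVariables false
set_option maxHeartbeats 1000000

section PtsCount

variable {F : Type} [Field F] [Fintype F] {V : Type} [AddCommGroup V] [Module F V] [Fintype V]

/-- The set of projective points lying in a subspace `W`. -/
def pts (W : Submodule F V) : Set (ℙ F V) := {P | P.rep ∈ W}

lemma mem_pts {W : Submodule F V} {P : ℙ F V} : P ∈ pts W ↔ P.rep ∈ W := Iff.rfl

lemma mk_mem_pts_iff {W : Submodule F V} {v : V} (hv : v ≠ 0) :
    Projectivization.mk F v hv ∈ pts W ↔ v ∈ W := by
  obtain ⟨a, ha⟩ := Projectivization.exists_smul_eq_mk_rep F v hv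
  constructor
  · intro h
    have h2 : a • v ∈ W := ha ▸ h
    rw [Units.smul_def] at h2
    exact (W.smul_mem_iff (by exact_mod_cast a.ne_zero)).mp h2
  · intro h
    show (Projectivization.mk F v hv).rep ∈ W
    rw [← ha, Units.smul_def]
    exact W.smul_mem _ h

lemma pts_bij (W : Submodule F V) :
    Function.Bijective (fun Pu : ↥(pts W) × Fˣ => (⟨(Pu.2 : F) • Pu.1.1.rep,
      W.smul_mem _ Pu.1.2, smul_ne_zero (by exact_mod_cast Pu.2.ne_zero) Pu.1.1.rep_nonzero⟩ :
        {v : V // v ∈ W ∧ v ≠ 0})) := by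
  constructor
  · rintro ⟨⟨P, hP⟩, u⟩ ⟨⟨Q, hQ⟩, w⟩ h
    simp only [Subtype.mk_eq_mk] at h
    have hPQ : P = Q := by
      have h1 : Projectivization.mk F ((u : F) • P.rep)
          (smul_ne_zero (by exact_mod_cast u.ne_zero) P.rep_nonzero) = P := by
        conv_rhs => rw [← P.mk_rep]
        rw [Projectivization.mk_eq_mk_iff]
        exact ⟨u, by simp [Units.smul_def]⟩
      have h2 : Projectivization.mk F ((w : F) • Q.rep)
          (smul_ne_zero (by exact_mod_cast w.ne_zero) Q.rep_nonzero) = Q := by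
        conv_rhs => rw [← Q.mk_rep]
        rw [Projectivization.mk_eq_mk_iff]
        exact ⟨w, by simp [Units.smul_def]⟩
      rw [← h1, ← h2]
      congr 1
    subst hPQ
    have h3 : ((u : F) - (w : F)) • P.rep = 0 := by
      rw [sub_smul, h, sub_self]
    have h4 := (smul_eq_zero.mp h3).resolve_right P.rep_nonzero
    have h5 : (u : F) = (w : F) := by linear_combination h4
    simp [Prod.ext_iff, Units.ext_iff, h5]
  · rintro ⟨v, hvW, hv⟩
    obtain ⟨a, ha⟩ := Projectivization.exists_smul_eq_mk_rep F v hv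
    refine ⟨⟨⟨Projectivization.mk F v hv, (mk_mem_pts_iff hv).mpr hvW⟩, a⁻¹⟩, ?_⟩
    ext
    simp only
    rw [← ha, Units.smul_def, smul_smul]
    simp

lemma card_pts (W : Submodule F V) :
    (Fintype.card F - 1) * Nat.card (pts W) = Fintype.card F ^ finrank F ↥W - 1 := by
  classical
  have h1 : Nat.card (↥(pts W) × Fˣ) = Nat.card {v : V // v ∈ W ∧ v ≠ 0} :=
    Nat.card_congr (Equiv.ofBijective _ (pts_bij W))
  have h2 : Nat.card {v : V // v ∈ W ∧ v ≠ 0} = Fintype.card F ^ finrank F W - 1 := by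
    have e : {v : V // v ∈ W ∧ v ≠ 0} ≃ {w : ↥W // ¬ (w = 0)} :=
      { toFun := fun v => ⟨⟨v.1, v.2.1⟩, by simp [Subtype.ext_iff]; exact v.2.2⟩
        invFun := fun w => ⟨w.1.1, w.1.2, by
          intro h0
          exact w.2 (by ext; exact h0)⟩
        left_inv := fun v => rfl
        right_inv := fun w => rfl }
    rw [Nat.card_congr e, Nat.card_eq_fintype_card, Fintype.card_subtype_compl,
      Fintype.card_subtype_eq, ← card_eq_pow_finrank (K := F) (V := ↥W)]
  rw [Nat.card_prod, Nat.card_units, Nat.card_eq_fintype_card (α := F)] at h1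
  rw [← h2, ← h1]
  ring

lemma pts_top : pts (⊤ : Submodule F V) = Set.univ := by
  ext P; simp [pts]

lemma pts_inf (W K : Submodule F V) : pts (W ⊓ K) = pts W ∩ pts K := by
  ext P; simp [pts, Submodule.mem_inf]

lemma pts_mono {W K : Submodule F V} (h : W ≤ K) : pts W ⊆ pts K := fun P hP => h hP

instance : Finite (ℙ F V) := Quotient.finite _

/-- Number of points of `W` off `K`. -/
lemma card_pts_diff (W K : Submodule F V) :
    (Fintype.card F - 1) * Nat.card ↥(pts W \ pts K) =
      Fintype.card F ^ finrank F ↥W - Fintype.card F ^ finrank F ↥(W ⊓ K) := by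
  have hsub : pts (W ⊓ K) ⊆ pts W := pts_mono inf_le_left
  have hdiff : pts W \ pts K = pts W \ pts (W ⊓ K) := by
    rw [pts_inf]; ext P; simp only [Set.mem_diff, Set.mem_inter_iff]; tauto
  rw [Nat.card_coe_set_eq, hdiff, Set.ncard_diff hsub (Set.toFinite _),
    Nat.mul_sub, ← Nat.card_coe_set_eq, ← Nat.card_coe_set_eq,
    card_pts, card_pts]
  have h1 : Fintype.card F ^ finrank F ↥(W ⊓ K) ≤ Fintype.card F ^ finrank F ↥W :=
    Nat.pow_le_pow_right Fintype.card_pos (Submodule.finrank_mono inf_le_left)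
  have h2 : 1 ≤ Fintype.card F ^ finrank F ↥(W ⊓ K) := Nat.one_le_pow _ _ Fintype.card_pos
  omega

/-- Inclusion-exclusion identity for the column set. -/
lemma card_cols_diff (A B : Submodule F V) (Kp : Set (ℙ F V)) :
    Nat.card ↥(((pts A ∪ pts B)ᶜ) \ Kp) + Nat.card ↥(pts A \ Kp) + Nat.card ↥(pts B \ Kp)
      = Nat.card ↥((Set.univ : Set (ℙ F V)) \ Kp) + Nat.card ↥(pts (A ⊓ B) \ Kp) := by
  classical
  simp only [Nat.card_coe_set_eq]
  rw [pts_inf]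
  set A' := pts A
  set B' := pts B
  have h1 : (A' \ Kp).ncard + (B' \ Kp).ncard
      = ((A' ∪ B') \ Kp).ncard + ((A' ∩ B') \ Kp).ncard := by
    have e1 : (A' \ Kp) ∪ (B' \ Kp) = (A' ∪ B') \ Kp := (Set.union_diff_distrib).symm
    have e2 : (A' \ Kp) ∩ (B' \ Kp) = (A' ∩ B') \ Kp := by
      ext x; simp only [Set.mem_diff, Set.mem_inter_iff]; tauto
    rw [← e1, ← e2, Set.ncard_union_add_ncard_inter _ _ (Set.toFinite _) (Set.toFinite _)]
  have h2 : ((A' ∪ B')ᶜ \ Kp).ncard + ((A' ∪ B') \ Kp).ncard = (Set.univ \ Kp).ncard := by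
    have e3 : ((A' ∪ B')ᶜ \ Kp) ∪ ((A' ∪ B') \ Kp) = Set.univ \ Kp := by
      ext x; simp only [Set.mem_diff, Set.mem_union, Set.mem_compl_iff, Set.mem_univ]; tauto
    have e4 : ((A' ∪ B')ᶜ \ Kp) ∩ ((A' ∪ B') \ Kp) = ∅ := by
      ext x; simp only [Set.mem_diff, Set.mem_inter_iff, Set.mem_compl_iff, Set.mem_union,
        Set.mem_empty_iff_false]; tauto
    rw [← e3, Set.ncard_union_eq ?_ (Set.toFinite _) (Set.toFinite _)]
    rw [Set.disjoint_iff_inter_eq_empty]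
    exact e4
  omega

/-- The master counting identity. -/
lemma count_identity (A B K : Submodule F V) :
    (Fintype.card F - 1) * Nat.card ↥(((pts A ∪ pts B)ᶜ) \ pts K)
      + (Fintype.card F ^ finrank F ↥A - Fintype.card F ^ finrank F ↥(A ⊓ K))
      + (Fintype.card F ^ finrank F ↥B - Fintype.card F ^ finrank F ↥(B ⊓ K))
    = (Fintype.card F ^ finrank F V - Fintype.card F ^ finrank F ↥K)
      + (Fintype.card F ^ finrank F ↥(A ⊓ B) - Fintype.card F ^ finrank F ↥(A ⊓ B ⊓ K)) := by
  have h0 := card_cols_diff A B (pts K)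
  have h1 := congrArg (fun t => (Fintype.card F - 1) * t) h0
  simp only [mul_add] at h1
  rw [card_pts_diff A K, card_pts_diff B K, card_pts_diff (A ⊓ B) K] at h1
  rw [show (Set.univ : Set (ℙ F V)) = pts (⊤ : Submodule F V) from pts_top.symm,
    card_pts_diff ⊤ K, top_inf_eq, finrank_top] at h1
  exact h1

end PtsCount

section Coord
variable {F : Type} [Field F] {k : ℕ}

/-- Subspace of vectors supported on a finite coordinate set. -/
def Vs (F : Type) [Field F] {k : ℕ} (s : Finset (Fin k)) : Submodule F (Fin k → F) where
  carrier := {v | ∀ i ∉ s, v i = 0}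
  add_mem' := by intro a b ha hb i hi; simp [ha i hi, hb i hi]
  zero_mem' := by intro i hi; rfl
  smul_mem' := by intro c v hv i hi; simp [hv i hi]

lemma mem_Vs {s : Finset (Fin k)} {v : Fin k → F} : v ∈ Vs F s ↔ ∀ i ∉ s, v i = 0 := Iff.rfl

noncomputable def VsEquiv (s : Finset (Fin k)) : ↥(Vs F s) ≃ₗ[F] (↥s → F) where
  toFun v := fun i => v.1 i
  map_add' := by intros; rfl
  map_smul' := by intros; rfl
  invFun g := ⟨fun j => if h : j ∈ s then g ⟨j, h⟩ else 0, by
    intro i hi; simp [hi]⟩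
  left_inv := by
    rintro ⟨v, hv⟩
    ext j
    by_cases h : j ∈ s <;> simp [h]
    exact (hv j h).symm
  right_inv := by
    intro g
    ext i
    simp [i.2]

lemma finrank_Vs (s : Finset (Fin k)) : finrank F ↥(Vs F s) = s.card := by
  rw [LinearEquiv.finrank_eq (VsEquiv s), finrank_pi, Fintype.card_coe]

lemma Vs_inf (s t : Finset (Fin k)) : Vs F s ⊓ Vs F t = Vs F (s ∩ t) := by
  ext v
  simp only [Submodule.mem_inf, mem_Vs, Finset.mem_inter, not_and_or]
  constructor
  · rintro ⟨h1, h2⟩ i hi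
    rcases hi with hi | hi
    · exact h1 i hi
    · exact h2 i hi
  · intro h
    exact ⟨fun i hi => h i (Or.inl hi), fun i hi => h i (Or.inr hi)⟩

lemma Vs_mono {s t : Finset (Fin k)} (h : s ⊆ t) : Vs F s ≤ Vs F t :=
  fun v hv i hi => hv i (fun hc => hi (h hc))

end Coord

/-- A helper: cardinality of a filtered `Fin k` finset. -/
lemma card_filter_fin (k : ℕ) (P : ℕ → Prop) [DecidablePred P] :
    (Finset.univ.filter (fun i : Fin k => P i.val)).card = ((Finset.range k).filter P).card := by
  apply Finset.card_bij (fun i _ => i.val)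
  · intro a ha
    simp only [Finset.mem_filter, Finset.mem_range, Finset.mem_univ, true_and] at ha ⊢
    exact ⟨a.isLt, ha⟩
  · intro a ha b hb h
    exact Fin.ext h
  · intro b hb
    simp only [Finset.mem_filter, Finset.mem_range] at hb
    exact ⟨⟨b, hb.1⟩, by simp [hb.2], rfl⟩


open Finset

/-- The Hamming weight of a vector. -/
noncomputable def hwt {F : Type} [Zero F] {n : ℕ} (c : Fin n → F) : ℕ :=
  Nat.card {i : Fin n // c i ≠ 0}

/-- The subcode support weight of a subspace of `F^n`. -/
noncomputable def suppWt {F : Type} [Field F] {n : ℕ} (X : Submodule F (Fin n → F)) : ℕ :=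
  Nat.card {i : Fin n // ∃ x ∈ X, x i ≠ 0}

/-- The minimum Hamming distance of a linear code. -/
noncomputable def minDist {F : Type} [Field F] {n : ℕ} (C : Submodule F (Fin n → F)) : ℕ :=
  sInf {w | ∃ c ∈ C, c ≠ 0 ∧ hwt c = w}

/-- The `r`-th generalized Hamming weight of a linear code. -/
noncomputable def ghw {F : Type} [Field F] {n : ℕ} (C : Submodule F (Fin n → F)) (r : ℕ) : ℕ :=
  sInf {w | ∃ U : Submodule F (Fin n → F), U ≤ C ∧ Module.finrank F ↥U = r ∧ suppWt U = w}

/-- `sswd C r j` = the number of `r`-dimensional subspaces `U` of `C` with support weight `j`. -/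
noncomputable def sswd {F : Type} [Field F] {n : ℕ} (C : Submodule F (Fin n → F)) (r j : ℕ) : ℕ :=
  Nat.card {U : Submodule F (Fin n → F) // U ≤ C ∧ Module.finrank F ↥U = r ∧ suppWt U = j}

/-- `wdist C j` = the number of codewords of `C` of Hamming weight `j`. -/
noncomputable def wdist {F : Type} [Field F] {n : ℕ} (C : Submodule F (Fin n → F)) (j : ℕ) : ℕ :=
  Nat.card {c : Fin n → F // c ∈ C ∧ hwt c = j}

/-- The q-ary Gaussian binomial coefficient `[k choose r]_q`. -/
def gbinom (q k r : ℕ) : ℕ :=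
  (∏ i ∈ Finset.range r, (q ^ k - q ^ i)) / (∏ i ∈ Finset.range r, (q ^ r - q ^ i))

/-- Ceiling division of naturals: `cdiv a b = ⌈a/b⌉`. -/
def cdiv (a b : ℕ) : ℕ := (a + b - 1) / b
/-- Abstract arithmetic helpers. -/
lemma arith_hd (q x1 x2 x3 : ℕ) (hq2 : 2 ≤ q) (h : x2 + x3 ≤ x1) :
    (q - 1) * (x1 - x2 - x3) + (q * x2 - x2) + (q * x3 - x3) = q * x1 - x1 := by
  have c1 : x2 ≤ x1 := by omega
  have c2 : x3 ≤ x1 - x2 := by omega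
  have c3 : x2 ≤ q * x2 := Nat.le_mul_of_pos_left _ (by omega)
  have c4 : x3 ≤ q * x3 := Nat.le_mul_of_pos_left _ (by omega)
  have c5 : x1 ≤ q * x1 := Nat.le_mul_of_pos_left _ (by omega)
  have c6 : 1 ≤ q := by omega
  zify [c1, c2, c3, c4, c5, c6]
  ring

lemma arith_lb (X Y s2 s3 S2 S3 R e : ℕ) (hE : X + s2 + s3 = R + e) (hd : Y + S2 + S3 = R)
    (h2 : s2 ≤ S2) (h3 : s3 ≤ S3) : Y ≤ X := by omega

/-- Corollary `3`: the modified Solomon-Stiffler code has few subcode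
support weights in every dimension `r`. -/
theorem stmt_17 (q : ℕ) (F : Type) [Field F] [Fintype F] (hq : Fintype.card F = q)
    (k u2 u3 : ℕ) (h12 : 1 < u2) (h23 : u2 < u3) (h3k : u3 < k) (h23k : u2 + u3 ≤ k + 1) :
    ∃ C : Submodule F
        (Fin ((q ^ k - 1) / (q - 1) - (q ^ u2 - 1) / (q - 1) - (q ^ u3 - 1) / (q - 1) + 1) → F),
      Module.finrank F ↥C = k ∧
      minDist C = q ^ (k - 1) - q ^ (u2 - 1) - q ^ (u3 - 1) ∧
      ∀ r, 1 ≤ r → r ≤ k →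
        {j : ℕ | sswd C r j ≠ 0}.ncard ≤
          2 * min (u2 * u3) (min ((r + 1) ^ 2) ((k - r + 1) ^ 2)) := by
  classical
  have hq2 : 2 ≤ q := by rw [← hq]; exact Fintype.one_lt_card
  have hk4 : 4 ≤ k := by omega
  set n := (q ^ k - 1) / (q - 1) - (q ^ u2 - 1) / (q - 1) - (q ^ u3 - 1) / (q - 1) + 1 with hn
  have hu2k : u2 < k := by omega
  -- power helpers
  have hpow : ∀ m : ℕ, 1 ≤ m → q ^ m = q * q ^ (m - 1) := by
    intro m hm
    conv_lhs => rw [show m = (m - 1) + 1 by omega]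
    rw [pow_succ, mul_comm]
  have hpmono : ∀ {a b : ℕ}, a ≤ b → q ^ a ≤ q ^ b := fun h =>
    Nat.pow_le_pow_right (by omega) h
  -- the q-analogue sums
  have hstrict : q ^ (u2 - 1) + q ^ (u3 - 1) < q ^ (k - 1) := by
    have s1 : q ^ (u2 - 1) < q ^ (u3 - 1) :=
      Nat.pow_lt_pow_right (by omega) (by omega)
    have s2 : q ^ (u3 - 1) * 2 ≤ q ^ (u3 - 1) * q := Nat.mul_le_mul_left _ hq2
    have s3 : q ^ (u3 - 1) * q = q ^ u3 := by
      rw [← pow_succ]; congr 1; omega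
    have s4 : q ^ u3 ≤ q ^ (k - 1) := hpmono (by omega)
    omega
  set d := q ^ (k - 1) - q ^ (u2 - 1) - q ^ (u3 - 1) with hd
  have hd1 : 1 ≤ d := by omega
  -- the master `d`-identity
  have hdid : (q - 1) * d + (q ^ u2 - q ^ (u2 - 1)) + (q ^ u3 - q ^ (u3 - 1))
      = q ^ k - q ^ (k - 1) := by
    rw [hd, hpow k (by omega), hpow u2 (by omega), hpow u3 (by omega)]
    exact arith_hd q _ _ _ hq2 (by omega)
  -- coordinate sets
  set s2 : Finset (Fin k) := Finset.univ.filter (fun i => i.val < u2) with hs2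
  set s3 : Finset (Fin k) := Finset.univ.filter
    (fun i => u2 - 1 ≤ i.val ∧ i.val < u2 + u3 - 1) with hs3
  have hmem2 : ∀ i : Fin k, i ∈ s2 ↔ i.val < u2 := by
    intro i; simp [hs2]
  have hmem3 : ∀ i : Fin k, i ∈ s3 ↔ u2 - 1 ≤ i.val ∧ i.val < u2 + u3 - 1 := by
    intro i; simp [hs3]
  have hcard2 : s2.card = u2 := by
    have e0 : s2.card = ((Finset.range k).filter (fun m => m < u2)).card := by
      rw [hs2]; exact card_filter_fin k (fun m => m < u2)
    rw [e0]
    have e : (Finset.range k).filter (fun m => m < u2) = Finset.range u2 := by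
      ext m; simp only [Finset.mem_filter, Finset.mem_range]; omega
    rw [e, Finset.card_range]
  have hcard3 : s3.card = u3 := by
    have e0 : s3.card = ((Finset.range k).filter (fun m => u2 - 1 ≤ m ∧ m < u2 + u3 - 1)).card := by
      rw [hs3]; exact card_filter_fin k (fun m => u2 - 1 ≤ m ∧ m < u2 + u3 - 1)
    rw [e0]
    have e : (Finset.range k).filter (fun m => u2 - 1 ≤ m ∧ m < u2 + u3 - 1)
        = Finset.Ico (u2 - 1) (u2 + u3 - 1) := by
      ext m; simp only [Finset.mem_filter, Finset.mem_range, Finset.mem_Ico]; omega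
    rw [e, Nat.card_Ico]; omega
  set pL : Fin k := ⟨u2 - 1, by omega⟩ with hpL
  have hs23 : s2 ∩ s3 = {pL} := by
    ext i
    simp only [Finset.mem_inter, Finset.mem_singleton, hmem2, hmem3, Fin.ext_iff, hpL]
    omega
  set V2 := Vs F s2 with hV2
  set V3 := Vs F s3 with hV3
  have hrk2 : Module.finrank F ↥V2 = u2 := by rw [hV2, finrank_Vs, hcard2]
  have hrk3 : Module.finrank F ↥V3 = u3 := by rw [hV3, finrank_Vs, hcard3]
  have hrkL : Module.finrank F ↥(V2 ⊓ V3) = 1 := by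
    rw [hV2, hV3, Vs_inf, hs23, finrank_Vs, Finset.card_singleton]
  have hrkV : Module.finrank F (Fin k → F) = k := by
    rw [Module.finrank_pi, Fintype.card_fin]
  -- the column set
  set Scol : Set (ℙ F (Fin k → F)) := (pts V2 ∪ pts V3)ᶜ with hScol
  -- weight equation for arbitrary K
  have hwEq : ∀ K : Submodule F (Fin k → F),
      (q - 1) * Nat.card ↥(Scol \ pts K)
        + (q ^ u2 - q ^ Module.finrank F ↥(V2 ⊓ K))
        + (q ^ u3 - q ^ Module.finrank F ↥(V3 ⊓ K))
      = (q ^ k - q ^ Module.finrank F ↥K)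
        + (q ^ 1 - q ^ Module.finrank F ↥(V2 ⊓ V3 ⊓ K)) := by
    intro K
    have h := count_identity V2 V3 K
    rw [hq, hrk2, hrk3, hrkL, hrkV] at h
    rw [pow_one] at h ⊢
    exact h
  -- dual dimension formula
  have hKdim : ∀ Φ : Submodule F (Module.Dual F (Fin k → F)),
      Module.finrank F ↥Φ.dualCoannihilator = k - Module.finrank F ↥Φ := by
    intro Φ
    have h := Subspace.finrank_add_finrank_dualCoannihilator_eq Φ
    rw [hrkV] at h
    omega
  -- the column set is nonempty
  have hScolpos : 1 ≤ Nat.card ↥Scol := by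
    have hi0' : (0 : ℕ) < k := by omega
    have hiK' : k - 1 < k := by omega
    obtain ⟨v0, hv0⟩ : ∃ v0 : Fin k → F,
        v0 = fun j => if j.val = 0 ∨ j.val = k - 1 then 1 else 0 := ⟨_, rfl⟩
    have hv0a : v0 ⟨0, hi0'⟩ = 1 := by
      rw [hv0]
      exact if_pos (Or.inl rfl)
    have hv0K : v0 ⟨k - 1, hiK'⟩ = 1 := by
      rw [hv0]
      exact if_pos (Or.inr rfl)
    have hv0ne : v0 ≠ 0 := by
      intro h
      have h1 : v0 ⟨0, hi0'⟩ = 0 := by rw [h]; rfl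
      rw [hv0a] at h1
      exact one_ne_zero h1
    have hn2 : v0 ∉ V2 := by
      intro hmem
      have h1 : v0 ⟨k - 1, hiK'⟩ = 0 := hmem ⟨k - 1, hiK'⟩ (by rw [hmem2]; simp; omega)
      rw [hv0K] at h1
      exact one_ne_zero h1
    have hn3 : v0 ∉ V3 := by
      intro hmem
      have h1 : v0 ⟨0, hi0'⟩ = 0 := hmem ⟨0, hi0'⟩ (by rw [hmem3]; simp; omega)
      rw [hv0a] at h1
      exact one_ne_zero h1
    have hP0 : Projectivization.mk F v0 hv0ne ∈ Scol := by
      rw [hScol]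
      simp only [Set.mem_compl_iff, Set.mem_union, not_or]
      rw [mk_mem_pts_iff hv0ne, mk_mem_pts_iff hv0ne]
      exact ⟨hn2, hn3⟩
    haveI : Nonempty ↥Scol := ⟨⟨_, hP0⟩⟩
    exact Nat.card_pos
  -- cardinality of the column set
  have hcol : Nat.card ↥Scol = n := by
    have hid0 := card_cols_diff V2 V3 (∅ : Set (ℙ F (Fin k → F)))
    simp only [Set.diff_empty] at hid0
    rw [← hScol] at hid0
    rw [show (Set.univ : Set (ℙ F (Fin k → F))) = pts (⊤ : Submodule F (Fin k → F))
      from pts_top.symm] at hid0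
    have hNT := card_pts (⊤ : Submodule F (Fin k → F))
    rw [hq, finrank_top, hrkV] at hNT
    have hN2 := card_pts V2
    rw [hq, hrk2] at hN2
    have hN3 := card_pts V3
    rw [hq, hrk3] at hN3
    have hNL := card_pts (V2 ⊓ V3)
    rw [hq, hrkL, pow_one] at hNL
    have hNL1 : Nat.card ↥(pts (V2 ⊓ V3)) = 1 := by
      apply Nat.eq_of_mul_eq_mul_left (show 0 < q - 1 by omega)
      rw [hNL]; omega
    have hdT : (q ^ k - 1) / (q - 1) = Nat.card ↥(pts (⊤ : Submodule F (Fin k → F))) :=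
      Nat.div_eq_of_eq_mul_left (by omega) (by rw [← hNT]; ring)
    have hd2 : (q ^ u2 - 1) / (q - 1) = Nat.card ↥(pts V2) :=
      Nat.div_eq_of_eq_mul_left (by omega) (by rw [← hN2]; ring)
    have hd3 : (q ^ u3 - 1) / (q - 1) = Nat.card ↥(pts V3) :=
      Nat.div_eq_of_eq_mul_left (by omega) (by rw [← hN3]; ring)
    rw [hn, hdT, hd2, hd3]
    omega
  haveI : Fintype ↥Scol := Fintype.ofFinite _
  have hfc : Fintype.card ↥Scol = n := by rw [← Nat.card_eq_fintype_card]; exact hcol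
  set ε : Fin n ≃ ↥Scol := (Fintype.equivFinOfCardEq hfc).symm with hε
  set G : Module.Dual F (Fin k → F) →ₗ[F] (Fin n → F) :=
    { toFun := fun f i => f (ε i).1.rep
      map_add' := fun f g => rfl
      map_smul' := fun c f => rfl } with hG
  set C := LinearMap.range G with hC
  -- support-size lemma
  have hsupp : ∀ Φ : Submodule F (Module.Dual F (Fin k → F)),
      Nat.card {i : Fin n // ∃ f ∈ Φ, G f i ≠ 0}
        = Nat.card ↥(Scol \ pts Φ.dualCoannihilator) := by
    intro Φ
    apply Nat.card_congr
    refine ((ε.subtypeEquiv (q := fun P : ↥Scol => ∃ f ∈ Φ, f P.1.rep ≠ 0)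
        (fun i => Iff.rfl)).trans
      ((Equiv.subtypeSubtypeEquivSubtypeInter (· ∈ Scol)
        (fun x => ∃ f ∈ Φ, f x.rep ≠ 0)).trans
        (Equiv.subtypeEquivRight ?_)))
    intro P
    simp only [Set.mem_diff]
    apply and_congr_right
    intro _
    rw [mem_pts, Submodule.mem_dualCoannihilator]
    push_neg
    rfl
  -- Hamming weight of a single codeword
  have hhwt : ∀ f : Module.Dual F (Fin k → F),
      hwt (G f) = Nat.card ↥(Scol \ pts (Submodule.span F {f}).dualCoannihilator) := by
    intro f
    rw [← hsupp]
    show Nat.card {i : Fin n // G f i ≠ 0} = _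
    apply Nat.card_congr
    apply Equiv.subtypeEquivRight
    intro i
    constructor
    · intro h; exact ⟨f, Submodule.mem_span_singleton_self f, h⟩
    · rintro ⟨g, hg, hgi⟩
      obtain ⟨c, rfl⟩ := Submodule.mem_span_singleton.mp hg
      intro h0
      apply hgi
      rw [map_smul]
      simp [h0]
  -- lower bound for weights through hyperplanes
  have hwLB : ∀ K : Submodule F (Fin k → F), Module.finrank F ↥K = k - 1 →
      d ≤ Nat.card ↥(Scol \ pts K) := by
    intro K hK
    have hE := hwEq K
    rw [hK] at hE
    have ha : u2 - 1 ≤ Module.finrank F ↥(V2 ⊓ K) := by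
      have h1 := Submodule.finrank_sup_add_finrank_inf_eq V2 K
      have h2 := Submodule.finrank_le (R := F) (V2 ⊔ K)
      rw [hrkV] at h2
      rw [hrk2, hK] at h1
      omega
    have hb : u3 - 1 ≤ Module.finrank F ↥(V3 ⊓ K) := by
      have h1 := Submodule.finrank_sup_add_finrank_inf_eq V3 K
      have h2 := Submodule.finrank_le (R := F) (V3 ⊔ K)
      rw [hrkV] at h2
      rw [hrk3, hK] at h1
      omega
    have key : (q - 1) * d ≤ (q - 1) * Nat.card ↥(Scol \ pts K) := by
      refine arith_lb _ _ _ _ _ _ _ _ hE hdid ?_ ?_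
      · have := hpmono ha; omega
      · have := hpmono hb; omega
    exact Nat.le_of_mul_le_mul_left key (by omega)
  -- injectivity of G
  have hGne : ∀ f : Module.Dual F (Fin k → F), f ≠ 0 → G f ≠ 0 := by
    intro f hf h0
    have hr : Module.finrank F ↥(Submodule.span F {f}).dualCoannihilator = k - 1 := by
      rw [hKdim, finrank_span_singleton hf]
    have hle := hwLB _ hr
    rw [← hhwt f] at hle
    have hzero : hwt (G f) = 0 := by
      rw [h0]
      have : IsEmpty {i : Fin n // (0 : Fin n → F) i ≠ 0} := ⟨fun x => x.2 rfl⟩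
      exact Nat.card_of_isEmpty
    omega
  have hGinj : Function.Injective G := by
    rw [← LinearMap.ker_eq_bot]
    rw [Submodule.eq_bot_iff]
    intro f hf
    by_contra hne
    exact hGne f hne hf
  have hrkC : Module.finrank F ↥C = k := by
    rw [hC, LinearMap.finrank_range_of_inj hGinj, Subspace.dual_finrank_eq, hrkV]
  -- exact minimum-weight identity helper
  have arith_eq : ∀ X Y S2 S3 R : ℕ, X + S2 + S3 = R → Y + S2 + S3 = R → X = Y := by
    intro X Y S2 S3 R h1 h2; omega
  refine ⟨C, hrkC, ?_, ?_⟩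
  · -- minimum distance
    have hu2k' : u2 < k := hu2k
    obtain ⟨i0, hi0⟩ : ∃ i0 : Fin k, i0 = ⟨0, by omega⟩ := ⟨_, rfl⟩
    obtain ⟨iu2, hiu2⟩ : ∃ iu2 : Fin k, iu2 = ⟨u2, hu2k⟩ := ⟨_, rfl⟩
    obtain ⟨f0, hf0⟩ : ∃ f0 : Module.Dual F (Fin k → F),
        f0 = (LinearMap.proj i0 : (Fin k → F) →ₗ[F] F) + (LinearMap.proj iu2 : (Fin k → F) →ₗ[F] F) :=
      ⟨_, rfl⟩
    have hf0v : ∀ v : Fin k → F, f0 v = v i0 + v iu2 := by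
      intro v; rw [hf0]; rfl
    have hf0ne : f0 ≠ 0 := by
      intro h
      have h1 : f0 (fun j => if j = i0 then 1 else 0) = 0 := by rw [h]; rfl
      rw [hf0v] at h1
      have hne01 : iu2 ≠ i0 := by
        rw [hi0, hiu2]
        intro hcon
        have := congrArg Fin.val hcon
        simp at this
        omega
      rw [if_pos rfl, if_neg hne01, add_zero] at h1
      exact one_ne_zero h1
    obtain ⟨K0, hK0⟩ : ∃ K0 : Submodule F (Fin k → F),
        K0 = (Submodule.span F {f0}).dualCoannihilator := ⟨_, rfl⟩
    have hmemK0 : ∀ v : Fin k → F, v ∈ K0 ↔ v i0 + v iu2 = 0 := by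
      intro v
      rw [hK0, Submodule.mem_dualCoannihilator]
      constructor
      · intro h
        rw [← hf0v]
        exact h f0 (Submodule.mem_span_singleton_self _)
      · intro h φ hφ
        obtain ⟨c, rfl⟩ := Submodule.mem_span_singleton.mp hφ
        rw [LinearMap.smul_apply, hf0v, h, smul_zero]
    have hrkK0 : Module.finrank F ↥K0 = k - 1 := by
      rw [hK0, hKdim, finrank_span_singleton hf0ne]
    have hiu2ns2 : iu2 ∉ s2 := by rw [hmem2, hiu2]; simp
    have hi0s2 : i0 ∈ s2 := by rw [hmem2, hi0]; simpa using (by omega : 0 < u2)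
    have hi0ns3 : i0 ∉ s3 := by rw [hmem3, hi0]; simp; omega
    have hiu2s3 : iu2 ∈ s3 := by rw [hmem3, hiu2]; simp; omega
    have hV2K0 : V2 ⊓ K0 = Vs F (s2.erase i0) := by
      ext v
      rw [Submodule.mem_inf, hmemK0]
      constructor
      · rintro ⟨h1, h2⟩ i hi
        rw [Finset.mem_erase] at hi
        push_neg at hi
        by_cases hiv : i ∈ s2
        · have hieq : i = i0 := by
            by_contra hne
            exact hi hne hiv
          subst hieq
          have hvu2 : v iu2 = 0 := h1 iu2 hiu2ns2
          rw [hvu2, add_zero] at h2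
          exact h2
        · exact h1 i hiv
      · intro h
        have hv2 : v ∈ V2 := by
          intro i hi
          exact h i (fun hc => hi (Finset.mem_of_mem_erase hc))
        refine ⟨hv2, ?_⟩
        have h0 : v i0 = 0 := h i0 (fun hc => (Finset.notMem_erase i0 s2) hc)
        have hu2' : v iu2 = 0 := hv2 iu2 hiu2ns2
        rw [h0, hu2', add_zero]
    have hV3K0 : V3 ⊓ K0 = Vs F (s3.erase iu2) := by
      ext v
      rw [Submodule.mem_inf, hmemK0]
      constructor
      · rintro ⟨h1, h2⟩ i hi
        rw [Finset.mem_erase] at hi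
        push_neg at hi
        by_cases hiv : i ∈ s3
        · have hieq : i = iu2 := by
            by_contra hne
            exact hi hne hiv
          subst hieq
          have hv0 : v i0 = 0 := h1 i0 hi0ns3
          rw [hv0, zero_add] at h2
          exact h2
        · exact h1 i hiv
      · intro h
        have hv3 : v ∈ V3 := by
          intro i hi
          exact h i (fun hc => hi (Finset.mem_of_mem_erase hc))
        refine ⟨hv3, ?_⟩
        have h0 : v iu2 = 0 := h iu2 (fun hc => (Finset.notMem_erase iu2 s3) hc)
        have hvi0 : v i0 = 0 := hv3 i0 hi0ns3
        rw [h0, hvi0, add_zero]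
    have ha0 : Module.finrank F ↥(V2 ⊓ K0) = u2 - 1 := by
      rw [hV2K0, finrank_Vs, Finset.card_erase_of_mem hi0s2, hcard2]
    have hb0 : Module.finrank F ↥(V3 ⊓ K0) = u3 - 1 := by
      rw [hV3K0, finrank_Vs, Finset.card_erase_of_mem hiu2s3, hcard3]
    have hc0 : V2 ⊓ V3 ⊓ K0 = V2 ⊓ V3 := by
      apply inf_eq_left.mpr
      intro v hv
      rw [hV2, hV3, Vs_inf, hs23] at hv
      rw [hmemK0]
      have h1 : v i0 = 0 := hv i0 (by
        rw [Finset.mem_singleton, hi0, hpL]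
        intro hcon
        have := congrArg Fin.val hcon; simp at this; omega)
      have h2 : v iu2 = 0 := hv iu2 (by
        rw [Finset.mem_singleton, hiu2, hpL]
        intro hcon
        have := congrArg Fin.val hcon; simp at this; omega)
      rw [h1, h2, add_zero]
    have hE0 := hwEq K0
    rw [hrkK0, ha0, hb0, hc0, hrkL, pow_one] at hE0
    rw [Nat.sub_self, add_zero] at hE0
    have hw0eq : (q - 1) * Nat.card ↥(Scol \ pts K0) = (q - 1) * d :=
      arith_eq _ _ _ _ _ hE0 hdid
    have hw0 : Nat.card ↥(Scol \ pts K0) = d :=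
      Nat.eq_of_mul_eq_mul_left (by omega) hw0eq
    have hmemd : d ∈ {w | ∃ c ∈ C, c ≠ 0 ∧ hwt c = w} := by
      refine ⟨G f0, ⟨f0, rfl⟩, hGne f0 hf0ne, ?_⟩
      rw [hhwt f0, ← hK0, hw0]
    show minDist C = d
    apply le_antisymm
    · exact Nat.sInf_le hmemd
    · apply le_csInf ⟨d, hmemd⟩
      rintro w ⟨c, hcC, hcne, rfl⟩
      obtain ⟨f, rfl⟩ := hcC
      have hf : f ≠ 0 := by
        intro h
        apply hcne
        rw [h, map_zero]
      rw [hhwt f]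
      exact hwLB _ (by rw [hKdim, finrank_span_singleton hf])
  · -- few subcode support weights
    intro r hr1 hrk
    have arith_solve : ∀ X s2' s3' R e : ℕ, X + s2' + s3' = R + e →
        X = R + e - s2' - s3' := by
      intro X s2' s3' R e h; omega
    obtain ⟨φ, hφ⟩ : ∃ φ : ℕ → ℕ → ℕ → ℕ, φ = fun a b c =>
        ((q ^ k - q ^ (k - r)) + (q ^ 1 - q ^ c) - (q ^ u2 - q ^ a) - (q ^ u3 - q ^ b))
          / (q - 1) := ⟨_, rfl⟩
    obtain ⟨A1, hA1⟩ : ∃ A1 : Finset ℕ,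
        A1 = Finset.Icc (max 1 (u2 - r)) (min u2 (k - r)) := ⟨_, rfl⟩
    obtain ⟨B1, hB1⟩ : ∃ B1 : Finset ℕ,
        B1 = Finset.Icc (max 1 (u3 - r)) (min u3 (k - r)) := ⟨_, rfl⟩
    obtain ⟨A0, hA0⟩ : ∃ A0 : Finset ℕ,
        A0 = Finset.Icc (u2 - r) (min (u2 - 1) (k - r)) := ⟨_, rfl⟩
    obtain ⟨B0, hB0⟩ : ∃ B0 : Finset ℕ,
        B0 = Finset.Icc (u3 - r) (min (u3 - 1) (k - r)) := ⟨_, rfl⟩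
    obtain ⟨T, hT⟩ : ∃ T : Finset ℕ, T = (A1 ×ˢ B1).image (fun ab => φ ab.1 ab.2 1)
        ∪ (A0 ×ˢ B0).image (fun ab => φ ab.1 ab.2 0) := ⟨_, rfl⟩
    have hsub : {j : ℕ | sswd C r j ≠ 0} ⊆ ↑T := by
      intro j hj
      have hne : Nonempty {U : Submodule F (Fin n → F) //
          U ≤ C ∧ Module.finrank F ↥U = r ∧ suppWt U = j} := (Nat.card_ne_zero.mp hj).1
      obtain ⟨⟨U, hUC, hUr, hUw⟩⟩ := hne
      obtain ⟨Φ, hΦ⟩ : ∃ Φ : Submodule F (Module.Dual F (Fin k → F)),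
          Φ = Submodule.comap G U := ⟨_, rfl⟩
      have hmap : Submodule.map G Φ = U := by
        rw [hΦ]
        exact Submodule.map_comap_eq_self (by rw [← hC]; exact hUC)
      have hrkΦ : Module.finrank F ↥Φ = r := by
        have e : Module.finrank F ↥Φ = Module.finrank F ↥(Submodule.map G Φ) :=
          LinearEquiv.finrank_eq (Submodule.equivMapOfInjective G hGinj Φ)
        rw [hmap, hUr] at e
        exact e
      obtain ⟨K, hK⟩ : ∃ K : Submodule F (Fin k → F),
          K = Φ.dualCoannihilator := ⟨_, rfl⟩
      have hrkK : Module.finrank F ↥K = k - r := by rw [hK, hKdim, hrkΦ]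
      have hjw : j = Nat.card ↥(Scol \ pts K) := by
        rw [← hUw]
        show Nat.card {i : Fin n // ∃ x ∈ U, x i ≠ 0} = _
        rw [hK, ← hsupp Φ]
        apply Nat.card_congr
        apply Equiv.subtypeEquivRight
        intro i
        constructor
        · rintro ⟨x, hx, hxi⟩
          rw [← hmap] at hx
          obtain ⟨f, hf, rfl⟩ := Submodule.mem_map.mp hx
          exact ⟨f, hf, hxi⟩
        · rintro ⟨f, hf, hfi⟩
          exact ⟨G f, by rw [← hmap]; exact Submodule.mem_map_of_mem hf, hfi⟩
      have hE := hwEq K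
      rw [hrkK] at hE
      rw [← hjw] at hE
      -- dimension bookkeeping
      have hau : Module.finrank F ↥(V2 ⊓ K) ≤ u2 := by
        rw [← hrk2]; exact Submodule.finrank_mono inf_le_left
      have hbu : Module.finrank F ↥(V3 ⊓ K) ≤ u3 := by
        rw [← hrk3]; exact Submodule.finrank_mono inf_le_left
      have hak : Module.finrank F ↥(V2 ⊓ K) ≤ k - r := by
        rw [← hrkK]; exact Submodule.finrank_mono inf_le_right
      have hbk : Module.finrank F ↥(V3 ⊓ K) ≤ k - r := by
        rw [← hrkK]; exact Submodule.finrank_mono inf_le_right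
      have hal : u2 + (k - r) ≤ k + Module.finrank F ↥(V2 ⊓ K) := by
        have h1 := Submodule.finrank_sup_add_finrank_inf_eq V2 K
        have h2 := Submodule.finrank_le (R := F) (V2 ⊔ K)
        rw [hrkV] at h2
        rw [hrk2, hrkK] at h1
        omega
      have hbl : u3 + (k - r) ≤ k + Module.finrank F ↥(V3 ⊓ K) := by
        have h1 := Submodule.finrank_sup_add_finrank_inf_eq V3 K
        have h2 := Submodule.finrank_le (R := F) (V3 ⊔ K)
        rw [hrkV] at h2
        rw [hrk3, hrkK] at h1
        omega
      have hca : Module.finrank F ↥(V2 ⊓ V3 ⊓ K) ≤ Module.finrank F ↥(V2 ⊓ K) :=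
        Submodule.finrank_mono (inf_le_inf_right K inf_le_left)
      have hcb : Module.finrank F ↥(V2 ⊓ V3 ⊓ K) ≤ Module.finrank F ↥(V3 ⊓ K) :=
        Submodule.finrank_mono (inf_le_inf_right K inf_le_right)
      have hc1 : Module.finrank F ↥(V2 ⊓ V3 ⊓ K) ≤ 1 := by
        rw [← hrkL]; exact Submodule.finrank_mono inf_le_left
      have hc0a : Module.finrank F ↥(V2 ⊓ V3 ⊓ K) = 0 →
          Module.finrank F ↥(V2 ⊓ K) + 1 ≤ u2 := by
        intro h0
        by_contra hcon
        have haeq : Module.finrank F ↥(V2 ⊓ K) = u2 := by omega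
        have hVeq : V2 ⊓ K = V2 :=
          Submodule.eq_of_le_of_finrank_eq inf_le_left (by rw [haeq, hrk2])
        have hV2K : V2 ≤ K := by
          intro v hv
          have : v ∈ V2 ⊓ K := by rw [hVeq]; exact hv
          exact this.2
        have heq : V2 ⊓ V3 ⊓ K = V2 ⊓ V3 :=
          inf_eq_left.mpr (le_trans inf_le_left hV2K)
        rw [heq, hrkL] at h0
        omega
      have hc0b : Module.finrank F ↥(V2 ⊓ V3 ⊓ K) = 0 →
          Module.finrank F ↥(V3 ⊓ K) + 1 ≤ u3 := by
        intro h0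
        by_contra hcon
        have hbeq : Module.finrank F ↥(V3 ⊓ K) = u3 := by omega
        have hVeq : V3 ⊓ K = V3 :=
          Submodule.eq_of_le_of_finrank_eq inf_le_left (by rw [hbeq, hrk3])
        have hV3K : V3 ≤ K := by
          intro v hv
          have : v ∈ V3 ⊓ K := by rw [hVeq]; exact hv
          exact this.2
        have heq : V2 ⊓ V3 ⊓ K = V2 ⊓ V3 :=
          inf_eq_left.mpr (le_trans inf_le_right hV3K)
        rw [heq, hrkL] at h0
        omega
      -- `j` is determined by the three dimensions
      have hjφ : j = φ (Module.finrank F ↥(V2 ⊓ K)) (Module.finrank F ↥(V3 ⊓ K))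
          (Module.finrank F ↥(V2 ⊓ V3 ⊓ K)) := by
        have hX := arith_solve _ _ _ _ _ hE
        rw [hφ]
        simp only
        rw [← hX, Nat.mul_div_cancel_left _ (show 0 < q - 1 by omega)]
      have hcval : Module.finrank F ↥(V2 ⊓ V3 ⊓ K) = 0 ∨
          Module.finrank F ↥(V2 ⊓ V3 ⊓ K) = 1 := by omega
      rw [Finset.mem_coe, hT, Finset.mem_union]
      rcases hcval with h0 | h1'
      · right
        rw [Finset.mem_image]
        refine ⟨(Module.finrank F ↥(V2 ⊓ K), Module.finrank F ↥(V3 ⊓ K)), ?_, ?_⟩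
        · rw [Finset.mem_product, hA0, hB0, Finset.mem_Icc, Finset.mem_Icc]
          have := hc0a h0
          have := hc0b h0
          constructor
          · constructor <;> omega
          · constructor <;> omega
        · rw [← h0, ← hjφ]
      · left
        rw [Finset.mem_image]
        refine ⟨(Module.finrank F ↥(V2 ⊓ K), Module.finrank F ↥(V3 ⊓ K)), ?_, ?_⟩
        · rw [Finset.mem_product, hA1, hB1, Finset.mem_Icc, Finset.mem_Icc]
          constructor
          · constructor
            · omega
            · omega
          · constructor <;> omega
        · rw [← h1', ← hjφ]
    -- count the target set
    have hfin : (↑T : Set ℕ).Finite := T.finite_toSet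
    have hcount : {j : ℕ | sswd C r j ≠ 0}.ncard ≤ T.card := by
      have h1 := Set.ncard_le_ncard hsub hfin
      rwa [Set.ncard_coe_finset] at h1
    have hTcard : T.card ≤ A1.card * B1.card + A0.card * B0.card := by
      rw [hT]
      refine le_trans (Finset.card_union_le _ _) ?_
      apply add_le_add
      · exact le_trans Finset.card_image_le (le_of_eq (Finset.card_product _ _))
      · exact le_trans Finset.card_image_le (le_of_eq (Finset.card_product _ _))
    have hm2 : A1.card ≤ min u2 (min (r + 1) (k - r + 1)) ∧
        A0.card ≤ min u2 (min (r + 1) (k - r + 1)) := by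
      rw [hA1, hA0, Nat.card_Icc, Nat.card_Icc]
      constructor <;> omega
    have hm3 : B1.card ≤ min u3 (min (r + 1) (k - r + 1)) ∧
        B0.card ≤ min u3 (min (r + 1) (k - r + 1)) := by
      rw [hB1, hB0, Nat.card_Icc, Nat.card_Icc]
      constructor <;> omega
    have hprod : A1.card * B1.card + A0.card * B0.card ≤
        2 * (min u2 (min (r + 1) (k - r + 1)) * min u3 (min (r + 1) (k - r + 1))) := by
      have p1 := Nat.mul_le_mul hm2.1 hm3.1
      have p2 := Nat.mul_le_mul hm2.2 hm3.2
      omega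
    have hfinal : min u2 (min (r + 1) (k - r + 1)) * min u3 (min (r + 1) (k - r + 1)) ≤
        min (u2 * u3) (min ((r + 1) ^ 2) ((k - r + 1) ^ 2)) := by
      apply le_min
      · exact Nat.mul_le_mul (min_le_left _ _) (min_le_left _ _)
      apply le_min
      · rw [pow_two]
        exact Nat.mul_le_mul (le_trans (min_le_right _ _) (min_le_left _ _))
          (le_trans (min_le_right _ _) (min_le_left _ _))
      · rw [pow_two]
        exact Nat.mul_le_mul (le_trans (min_le_right _ _) (min_le_right _ _))
          (le_trans (min_le_right _ _) (min_le_right _ _))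
    calc {j : ℕ | sswd C r j ≠ 0}.ncard ≤ T.card := hcount
      _ ≤ A1.card * B1.card + A0.card * B0.card := hTcard
      _ ≤ 2 * (min u2 (min (r + 1) (k - r + 1)) * min u3 (min (r + 1) (k - r + 1))) := hprod
      _ ≤ 2 * min (u2 * u3) (min ((r + 1) ^ 2) ((k - r + 1) ^ 2)) :=
          Nat.mul_le_mul_left 2 hfinal
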